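/- For any non-negative integers b and c, as an identity of rational numbers: 2 * Cat(b) = C(b, c+1)/4^c + \sum_{j=1}^{c} C(b+1, j)/4^j. -/

import Mathlib

/-- The bivariate Catalan number `C(m, n) = (2m)! (2n)! / (m! (m+n)! n!)`, as a rational. -/
def bivariateCatalan (m n : ℕ) : ℚ :=
  ((2 * m).factorial * (2 * n).factorial : ℚ) /
    (m.factorial * (m + n).factorial * n.factorial)

lemma fact_cast_ne (n : ℕ) : (n.factorial : ℚ) ≠ 0 := by
  exact_mod_cast n.factorial_ne_zero

lemma biv_rec (b n : ℕ) :
    bivariateCatalan b (n + 1) + bivariateCatalan (b + 1) n = 4 * bivariateCatalan b n := by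
  unfold bivariateCatalan
  have h1 : (2 * (n + 1)).factorial = (2 * n + 2) * ((2 * n + 1) * (2 * n).factorial) := by
    have : 2 * (n + 1) = 2 * n + 1 + 1 := by ring
    rw [this, Nat.factorial_succ, Nat.factorial_succ]
  have h2 : (2 * (b + 1)).factorial = (2 * b + 2) * ((2 * b + 1) * (2 * b).factorial) := by
    have : 2 * (b + 1) = 2 * b + 1 + 1 := by ring
    rw [this, Nat.factorial_succ, Nat.factorial_succ]
  have h3 : (n + 1).factorial = (n + 1) * n.factorial := Nat.factorial_succ n
  have h4 : (b + (n + 1)).factorial = (b + n + 1) * (b + n).factorial := by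
    have : b + (n + 1) = (b + n) + 1 := by ring
    rw [this, Nat.factorial_succ]
  have h5 : (b + 1 + n).factorial = (b + n + 1) * (b + n).factorial := by
    have : b + 1 + n = (b + n) + 1 := by ring
    rw [this, Nat.factorial_succ]
  have h6 : (b + 1).factorial = (b + 1) * b.factorial := Nat.factorial_succ b
  rw [h1, h2, h3, h4, h5, h6]
  push_cast
  have hb := fact_cast_ne b
  have hn := fact_cast_ne n
  have h2b := fact_cast_ne (2 * b)
  have h2n := fact_cast_ne (2 * n)
  have hbn := fact_cast_ne (b + n)
  have hb1 : (b : ℚ) + n + 1 ≠ 0 := by positivity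
  have hn1 : (n : ℚ) + 1 ≠ 0 := by positivity
  have hbb1 : (b : ℚ) + 1 ≠ 0 := by positivity
  field_simp
  ring

lemma two_catalan (b : ℕ) : 2 * (catalan b : ℚ) = bivariateCatalan b 1 := by
  have h1 : (b + 1) * catalan b = b.centralBinom := succ_mul_catalan_eq_centralBinom b
  have h2 : b.centralBinom * b.factorial * b.factorial = (2 * b).factorial := by
    have := Nat.choose_mul_factorial_mul_factorial (show b ≤ 2 * b by omega)
    simpa [Nat.centralBinom, show 2 * b - b = b by omega] using this
  have h1q : ((b : ℚ) + 1) * catalan b = b.centralBinom := by exact_mod_cast h1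
  have h2q : (b.centralBinom : ℚ) * b.factorial * b.factorial = (2 * b).factorial := by
    exact_mod_cast h2
  unfold bivariateCatalan
  have hb := fact_cast_ne b
  have hb1 : (b : ℚ) + 1 ≠ 0 := by positivity
  have h6 : (b + 1).factorial = (b + 1) * b.factorial := Nat.factorial_succ b
  rw [h6]
  push_cast
  rw [← h2q, ← h1q]
  field_simp
  ring

theorem catalan_from_bivariate_catalan (b c : ℕ) :
    2 * (catalan b : ℚ)
    = bivariateCatalan b (c + 1) / 4 ^ c
        + ∑ j ∈ Finset.Icc 1 c, bivariateCatalan (b + 1) j / 4 ^ j := by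
  induction c with
  | zero => simp [two_catalan]
  | succ c ih =>
    rw [Finset.sum_Icc_succ_top (by omega : 1 ≤ c + 1), ih]
    generalize (∑ j ∈ Finset.Icc 1 c, bivariateCatalan (b + 1) j / 4 ^ j) = S
    have hrec := biv_rec b (c + 1)
    have h4 : (4 : ℚ) ^ (c + 1) ≠ 0 := by positivity
    field_simp
    ring_nf
    ring_nf at hrec
    linear_combination (-1 : ℚ) * 4 ^ c * hrec
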